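/- Arrow update model logic is invariant under bisimulation: if (M,s) and (M',s') are bisimilar pointed relational models, then for every formula φ of arrow update model logic, M,s ⊨ φ iff M',s' ⊨ φ. -/

import Mathlib

namespace AAUML

/-- Formulas of arbitrary arrow update model logic over atoms `P` and agents `A`.
An arrow update model is encoded as a finite list of arrows
`(agent, source outcome, source condition, target outcome, target condition)`,
with outcomes drawn from `ℕ`; `upd U o φ` is `[U,o]φ` and `all φ` is `[↑]φ`. -/
inductive Form (P A : Type) : Type where
  | atom : P → Form P A
  | neg  : Form P A → Form P A
  | and  : Form P A → Form P A → Form P A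
  | box  : A → Form P A → Form P A
  | upd  : List (A × ℕ × Form P A × ℕ × Form P A) → ℕ → Form P A → Form P A
  | all  : Form P A → Form P A

/-- An arrow: agent, source outcome, source condition, target outcome, target condition. -/
abbrev Arrow (P A : Type) := A × ℕ × Form P A × ℕ × Form P A

/-- Formulas of basic multi-agent modal logic: no update modality, no quantifier. -/
inductive Form.Modal {P A : Type} : Form P A → Prop
  | atom (p : P) : Form.Modal (.atom p)
  | neg {φ : Form P A} : Form.Modal φ → Form.Modal (.neg φ)
  | and {φ ψ : Form P A} : Form.Modal φ → Form.Modal ψ → Form.Modal (.and φ ψ)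
  | box (a : A) {φ : Form P A} : Form.Modal φ → Form.Modal (.box a φ)

/-- Formulas of arrow update model logic (no arbitrary-update quantifier anywhere,
including inside the conditions of arrow update models). -/
inductive Form.NoQuant {P A : Type} : Form P A → Prop
  | atom (p : P) : Form.NoQuant (.atom p)
  | neg {φ : Form P A} : Form.NoQuant φ → Form.NoQuant (.neg φ)
  | and {φ ψ : Form P A} : Form.NoQuant φ → Form.NoQuant ψ → Form.NoQuant (.and φ ψ)
  | box (a : A) {φ : Form P A} : Form.NoQuant φ → Form.NoQuant (.box a φ)
  | upd {U : List (Arrow P A)} (o : ℕ) {φ : Form P A} : Form.NoQuant φ →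
      (∀ ar ∈ U, Form.NoQuant ar.2.2.1) → (∀ ar ∈ U, Form.NoQuant ar.2.2.2.2) →
      Form.NoQuant (.upd U o φ)

/-- Propositional formulas (no modalities at all). -/
inductive Form.Prp {P A : Type} : Form P A → Prop
  | atom (p : P) : Form.Prp (.atom p)
  | neg {φ : Form P A} : Form.Prp φ → Form.Prp (.neg φ)
  | and {φ ψ : Form P A} : Form.Prp φ → Form.Prp ψ → Form.Prp (.and φ ψ)

/-- A relational (Kripke) model. -/
structure KModel (P A : Type) : Type 1 where
  World : Type
  R : A → World → World → Prop
  V : World → P → Prop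

variable {P A : Type}

/-- Satisfaction for basic modal formulas (junk value `False` on updates/quantifiers;
only used on modal formulas). -/
def msat (M : KModel P A) : M.World → Form P A → Prop
  | s, .atom p => M.V s p
  | s, .neg φ => ¬ msat M s φ
  | s, .and φ ψ => msat M s φ ∧ msat M s ψ
  | s, .box a φ => ∀ t, M.R a s t → msat M t φ
  | _, .upd _ _ _ => False
  | _, .all _ => False

/-- Some arrow of `U` for agent `a` from outcome `o` to outcome `o'` has its (modal)
source condition true at `s` and its target condition true at `s'`. -/
def marrowOK (M : KModel P A) (U : List (Arrow P A)) (a : A) (o o' : ℕ)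
    (s s' : M.World) : Prop :=
  ∃ ψ ψ', (a, o, ψ, o', ψ') ∈ U ∧ msat M s ψ ∧ msat M s' ψ'

/-- All source and target conditions of `U` are basic modal formulas. -/
def ModalArrows (U : List (Arrow P A)) : Prop :=
  ∀ ar ∈ U, Form.Modal ar.2.2.1 ∧ Form.Modal ar.2.2.2.2

mutual
  /-- Satisfaction `M,s ⊨ φ`.  The case `upd U o φ` is interpreted in the product
  model `M*U` (inlined); `all φ` quantifies over all arrow update models with basic
  modal source and target conditions. -/
  def Form.sat : (M : KModel P A) → M.World → Form P A → Prop
    | M, s, .atom p => M.V s p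
    | M, s, .neg φ => ¬ Form.sat M s φ
    | M, s, .and φ ψ => Form.sat M s φ ∧ Form.sat M s ψ
    | M, s, .box a φ => ∀ t, M.R a s t → Form.sat M t φ
    | M, s, .upd U o φ =>
        Form.sat ⟨M.World × ℕ,
          fun a x y => M.R a x.1 y.1 ∧ satList M U a x.2 y.2 x.1 y.1,
          fun x p => M.V x.1 p⟩ (s, o) φ
    | M, s, .all φ => ∀ (U : List (Arrow P A)) (o : ℕ), ModalArrows U →
        Form.sat ⟨M.World × ℕ,
          fun a x y => M.R a x.1 y.1 ∧ marrowOK M U a x.2 y.2 x.1 y.1,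
          fun x p => M.V x.1 p⟩ (s, o) φ
  termination_by M s φ => sizeOf φ

  /-- Some arrow of the list, for agent `a`, from `o` to `o'`, has its source condition
  true at `s` and its target condition true at `s'`. -/
  def satList : (M : KModel P A) → List (Arrow P A) → A → ℕ → ℕ → M.World → M.World → Prop
    | _, [], _, _, _, _, _ => False
    | M, (b, o1, ψ, o2, ψ') :: rest, a, o, o', s, s' =>
        (b = a ∧ o1 = o ∧ o2 = o' ∧ Form.sat M s ψ ∧ Form.sat M s' ψ') ∨
        satList M rest a o o' s s'
  termination_by M U a o o' s s' => sizeOf U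
end

/-- The product `M*U` of a relational model and an arrow update model. -/
def prodModel (M : KModel P A) (U : List (Arrow P A)) : KModel P A :=
  ⟨M.World × ℕ,
   fun a x y => M.R a x.1 y.1 ∧ satList M U a x.2 y.2 x.1 y.1,
   fun x p => M.V x.1 p⟩

def Valid (φ : Form P A) : Prop := ∀ (M : KModel P A) (s : M.World), Form.sat M s φ

def Form.or (φ ψ : Form P A) : Form P A := .neg (.and (.neg φ) (.neg ψ))
def Form.imp (φ ψ : Form P A) : Form P A := .neg (.and φ (.neg ψ))
def Form.dia (a : A) (φ : Form P A) : Form P A := .neg (.box a (.neg φ))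
/-- `⟨U,o⟩φ` -/
def Form.diaUpd (U : List (Arrow P A)) (o : ℕ) (φ : Form P A) : Form P A :=
  .neg (.upd U o (.neg φ))
/-- `⟨↑⟩φ` -/
def Form.ex (φ : Form P A) : Form P A := .neg (.all (.neg φ))
/-- A canonical tautology. -/
def Form.top [Inhabited P] : Form P A := .neg (.and (.atom default) (.neg (.atom default)))
/-- Finite conjunction. -/
def Form.conj [Inhabited P] : List (Form P A) → Form P A
  | [] => Form.top
  | φ :: rest => .and φ (Form.conj rest)

/-- `Z` is a bisimulation between `M` and `N`. -/
def IsBisim (M N : KModel P A) (Z : M.World → N.World → Prop) : Prop :=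
  ∀ s s', Z s s' →
    (∀ p, M.V s p ↔ N.V s' p) ∧
    (∀ a t, M.R a s t → ∃ t', N.R a s' t' ∧ Z t t') ∧
    (∀ a t', N.R a s' t' → ∃ t, M.R a s t ∧ Z t t')

/-- Bisimilarity of pointed models. -/
def Bisimilar (M : KModel P A) (s : M.World) (N : KModel P A) (s' : N.World) : Prop :=
  ∃ Z, IsBisim M N Z ∧ Z s s'

/-- An action model: actions with accessibility relations and preconditions. -/
structure AModel (P A : Type) : Type 1 where
  Action : Type
  rel : A → Action → Action → Prop
  pre : Action → Form P A

/-- The restricted modal product `M ⊗ E`. -/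
def actProd (M : KModel P A) (E : AModel P A) : KModel P A :=
  ⟨{x : M.World × E.Action // Form.sat M x.1 (E.pre x.2)},
   fun a x y => M.R a x.1.1 y.1.1 ∧ E.rel a x.1.2 y.1.2,
   fun x p => M.V x.1.1 p⟩

/-- `M,s ⊨ [E,e]φ`: if the precondition of `e` holds at `s` then `φ` holds at `(s,e)`
in `M ⊗ E`. -/
def actSat (M : KModel P A) (E : AModel P A) (s : M.World) (e : E.Action)
    (φ : Form P A) : Prop :=
  ∀ h : Form.sat M s (E.pre e), Form.sat (actProd M E) ⟨(s, e), h⟩ φ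


lemma satList_iff (M N : KModel P A) (Z : M.World → N.World → Prop)
    (U : List (Arrow P A))
    (h : ∀ ar ∈ U,
      (∀ s s', Z s s' → (Form.sat M s ar.2.2.1 ↔ Form.sat N s' ar.2.2.1)) ∧
      (∀ s s', Z s s' → (Form.sat M s ar.2.2.2.2 ↔ Form.sat N s' ar.2.2.2.2)))
    (a : A) (o o' : ℕ) {s : M.World} {s' : N.World} {t : M.World} {t' : N.World}
    (hs : Z s s') (ht : Z t t') :
    satList M U a o o' s t ↔ satList N U a o o' s' t' := by
  induction U with
  | nil => simp [satList]
  | cons ar rest ih =>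
    obtain ⟨b, o1, ψ, o2, ψ'⟩ := ar
    have h1 := h _ List.mem_cons_self
    simp only [satList]
    rw [ih (fun ar hm => h ar (List.mem_cons_of_mem _ hm)),
        h1.1 s s' hs, h1.2 t t' ht]

lemma sat_bisim : ∀ (φ : Form P A), φ.NoQuant →
    ∀ (M N : KModel P A) (Z : M.World → N.World → Prop), IsBisim M N Z →
    ∀ s s', Z s s' → (Form.sat M s φ ↔ Form.sat N s' φ) := by
  intro φ hφ
  induction hφ with
  | atom p =>
    intro M N Z hZ s s' hs
    simpa only [Form.sat] using (hZ s s' hs).1 p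
  | neg _ ih =>
    intro M N Z hZ s s' hs
    simp only [Form.sat]
    exact not_congr (ih M N Z hZ s s' hs)
  | and _ _ ih1 ih2 =>
    intro M N Z hZ s s' hs
    simp only [Form.sat]
    exact and_congr (ih1 M N Z hZ s s' hs) (ih2 M N Z hZ s s' hs)
  | box a _ ih =>
    intro M N Z hZ s s' hs
    simp only [Form.sat]
    constructor
    · intro H t' hr
      obtain ⟨t, hrt, hzt⟩ := (hZ s s' hs).2.2 a t' hr
      exact (ih M N Z hZ t t' hzt).mp (H t hrt)
    · intro H t hr
      obtain ⟨t', hrt, hzt⟩ := (hZ s s' hs).2.1 a t hr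
      exact (ih M N Z hZ t t' hzt).mpr (H t' hrt)
  | @upd U o ψ hψ hsrc htgt ihψ ihsrc ihtgt =>
    intro M N Z hZ s s' hs
    have hcond : ∀ ar ∈ U,
        (∀ s s', Z s s' → (Form.sat M s ar.2.2.1 ↔ Form.sat N s' ar.2.2.1)) ∧
        (∀ s s', Z s s' → (Form.sat M s ar.2.2.2.2 ↔ Form.sat N s' ar.2.2.2.2)) :=
      fun ar hm => ⟨fun s s' h => ihsrc ar hm M N Z hZ s s' h,
                    fun s s' h => ihtgt ar hm M N Z hZ s s' h⟩
    have hbis : IsBisim (prodModel M U) (prodModel N U)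
        (fun x y => Z x.1 y.1 ∧ x.2 = y.2) := by
      rintro ⟨x1, x2⟩ ⟨y1, y2⟩ ⟨hz, he⟩
      subst he
      refine ⟨fun p => (hZ x1 y1 hz).1 p, ?_, ?_⟩
      · rintro a ⟨t1, t2⟩ ⟨hr, hsl⟩
        obtain ⟨t', hrt, hzt⟩ := (hZ x1 y1 hz).2.1 a t1 hr
        exact ⟨(t', t2), ⟨hrt, (satList_iff M N Z U hcond a x2 t2 hz hzt).mp hsl⟩,
          hzt, rfl⟩
      · rintro a ⟨t1, t2⟩ ⟨hr, hsl⟩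
        obtain ⟨t, hrt, hzt⟩ := (hZ x1 y1 hz).2.2 a t1 hr
        exact ⟨(t, t2), ⟨hrt, (satList_iff M N Z U hcond a x2 t2 hz hzt).mpr hsl⟩,
          hzt, rfl⟩
    simp only [Form.sat]
    exact ihψ (prodModel M U) (prodModel N U) _ hbis (s, o) (s', o) ⟨hs, rfl⟩

/-- arrow update model logic is invariant under bisimulation. -/
theorem auml_bisim_invariant (P A : Type) (M N : KModel P A)
    (s : M.World) (s' : N.World) (hb : Bisimilar M s N s')
    (φ : Form P A) (hφ : φ.NoQuant) :
    Form.sat M s φ ↔ Form.sat N s' φ := by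
  obtain ⟨Z, hZ, hs⟩ := hb
  exact sat_bisim φ hφ M N Z hZ s s' hs

end AAUML
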